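/- Suppose z ∈ ℂ∖{0} is such that the nonnegative matrix series N1(|z|), G1(|z|) and R1(|z|) converge entrywise, and define H1(z) = A_{*,0}(z) + A_{*,1}(z)·N1(z)·A_{*,−1}(z). Then both I − H1(z) and N1(z) are invertible and N1(z) = (I − H1(z))^{−1}. -/

import Mathlib

namespace QBDSeries

/-- The index set `H = {-1, 0, 1}`. -/
def Hs : Finset ℤ := {-1, 0, 1}

/-- Partial sum of the first `k` entries of a sequence `σ : Fin n → ℤ`. -/
def psum {n : ℕ} (σ : Fin n → ℤ) (k : ℕ) : ℤ :=
  ∑ i ∈ Finset.univ.filter (fun i : Fin n => (i : ℕ) < k), σ i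

/-- Condition defining the index set `𝓘_n`. -/
def condQ (n : ℕ) (σ : Fin n → ℤ) : Prop :=
  (∀ k : ℕ, 1 ≤ k → k ≤ n - 1 → 0 ≤ psum σ k) ∧ psum σ n = 0

/-- Condition defining the index set `𝓘_{D,n}`. -/
def condD (n : ℕ) (σ : Fin n → ℤ) : Prop :=
  (∀ k : ℕ, 1 ≤ k → k ≤ n - 1 → 0 ≤ psum σ k) ∧ psum σ n = -1

/-- Condition defining the index set `𝓘_{U,n}`. -/
def condU (n : ℕ) (σ : Fin n → ℤ) : Prop :=
  (∀ k : ℕ, 1 ≤ k → k ≤ n - 1 → 1 ≤ psum σ k) ∧ psum σ n = 1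

/-- `A_{*,i}(z) = Σ_{j∈H} A_{j,i} z^j` over `ℂ`. -/
noncomputable def AstarC (s0 : ℕ) (A : ℤ → ℤ → Matrix (Fin s0) (Fin s0) ℝ) (z : ℂ) (i : ℤ) :
    Matrix (Fin s0) (Fin s0) ℂ :=
  ∑ j ∈ Hs, (z ^ j) • (A j i).map Complex.ofReal

/-- `A_{*,i}(z) = Σ_{j∈H} A_{j,i} z^j` over `ℝ`. -/
noncomputable def AstarR (s0 : ℕ) (A : ℤ → ℤ → Matrix (Fin s0) (Fin s0) ℝ) (z : ℝ) (i : ℤ) :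
    Matrix (Fin s0) (Fin s0) ℝ :=
  ∑ j ∈ Hs, (z ^ j) • A j i

open Classical in
/-- `Σ_{σ ∈ cond} A_{*,σ1}(z)⋯A_{*,σn}(z)` over `ℂ`. -/
noncomputable def pathSumC (s0 : ℕ) (A : ℤ → ℤ → Matrix (Fin s0) (Fin s0) ℝ) (z : ℂ) (n : ℕ)
    (cond : (Fin n → ℤ) → Prop) : Matrix (Fin s0) (Fin s0) ℂ :=
  ∑ σ : Fin n → {x : ℤ // x ∈ Hs},
    if cond (fun k => (σ k : ℤ)) then (List.ofFn fun k : Fin n => AstarC s0 A z (σ k : ℤ)).prod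
    else 0

open Classical in
/-- `Σ_{σ ∈ cond} A_{*,σ1}(z)⋯A_{*,σn}(z)` over `ℝ`. -/
noncomputable def pathSumR (s0 : ℕ) (A : ℤ → ℤ → Matrix (Fin s0) (Fin s0) ℝ) (z : ℝ) (n : ℕ)
    (cond : (Fin n → ℤ) → Prop) : Matrix (Fin s0) (Fin s0) ℝ :=
  ∑ σ : Fin n → {x : ℤ // x ∈ Hs},
    if cond (fun k => (σ k : ℤ)) then (List.ofFn fun k : Fin n => AstarR s0 A z (σ k : ℤ)).prod
    else 0

/-- `Q^{(n)}(z)` (complex); `Q^{(0)}(z) = I`. -/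
noncomputable def QmatC (s0 : ℕ) (A : ℤ → ℤ → Matrix (Fin s0) (Fin s0) ℝ) (z : ℂ) (n : ℕ) :
    Matrix (Fin s0) (Fin s0) ℂ := pathSumC s0 A z n (condQ n)

/-- `D^{(n)}(z)` (complex); it vanishes for `n = 0`. -/
noncomputable def DmatC (s0 : ℕ) (A : ℤ → ℤ → Matrix (Fin s0) (Fin s0) ℝ) (z : ℂ) (n : ℕ) :
    Matrix (Fin s0) (Fin s0) ℂ := pathSumC s0 A z n (condD n)

/-- `U^{(n)}(z)` (complex); it vanishes for `n = 0`. -/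
noncomputable def UmatC (s0 : ℕ) (A : ℤ → ℤ → Matrix (Fin s0) (Fin s0) ℝ) (z : ℂ) (n : ℕ) :
    Matrix (Fin s0) (Fin s0) ℂ := pathSumC s0 A z n (condU n)

/-- `Q^{(n)}(z)` (real). -/
noncomputable def QmatR (s0 : ℕ) (A : ℤ → ℤ → Matrix (Fin s0) (Fin s0) ℝ) (z : ℝ) (n : ℕ) :
    Matrix (Fin s0) (Fin s0) ℝ := pathSumR s0 A z n (condQ n)

/-- `D^{(n)}(z)` (real). -/
noncomputable def DmatR (s0 : ℕ) (A : ℤ → ℤ → Matrix (Fin s0) (Fin s0) ℝ) (z : ℝ) (n : ℕ) :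
    Matrix (Fin s0) (Fin s0) ℝ := pathSumR s0 A z n (condD n)

/-- `U^{(n)}(z)` (real). -/
noncomputable def UmatR (s0 : ℕ) (A : ℤ → ℤ → Matrix (Fin s0) (Fin s0) ℝ) (z : ℝ) (n : ℕ) :
    Matrix (Fin s0) (Fin s0) ℝ := pathSumR s0 A z n (condU n)

/-- `N1(z) = Σ_{n≥0} Q^{(n)}(z)`, entrywise (complex). -/
noncomputable def N1C (s0 : ℕ) (A : ℤ → ℤ → Matrix (Fin s0) (Fin s0) ℝ) (z : ℂ) :
    Matrix (Fin s0) (Fin s0) ℂ := Matrix.of fun i j => ∑' n : ℕ, QmatC s0 A z n i j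

/-- `G1(z) = Σ_{n≥1} D^{(n)}(z)`, entrywise (complex). -/
noncomputable def G1C (s0 : ℕ) (A : ℤ → ℤ → Matrix (Fin s0) (Fin s0) ℝ) (z : ℂ) :
    Matrix (Fin s0) (Fin s0) ℂ := Matrix.of fun i j => ∑' n : ℕ, DmatC s0 A z n i j

/-- `R1(z) = Σ_{n≥1} U^{(n)}(z)`, entrywise (complex). -/
noncomputable def R1C (s0 : ℕ) (A : ℤ → ℤ → Matrix (Fin s0) (Fin s0) ℝ) (z : ℂ) :
    Matrix (Fin s0) (Fin s0) ℂ := Matrix.of fun i j => ∑' n : ℕ, UmatC s0 A z n i j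

/-- `N1(z)` (real). -/
noncomputable def N1R (s0 : ℕ) (A : ℤ → ℤ → Matrix (Fin s0) (Fin s0) ℝ) (z : ℝ) :
    Matrix (Fin s0) (Fin s0) ℝ := Matrix.of fun i j => ∑' n : ℕ, QmatR s0 A z n i j

/-- `G1(z)` (real). -/
noncomputable def G1R (s0 : ℕ) (A : ℤ → ℤ → Matrix (Fin s0) (Fin s0) ℝ) (z : ℝ) :
    Matrix (Fin s0) (Fin s0) ℝ := Matrix.of fun i j => ∑' n : ℕ, DmatR s0 A z n i j

/-- `R1(z)` (real). -/
noncomputable def R1R (s0 : ℕ) (A : ℤ → ℤ → Matrix (Fin s0) (Fin s0) ℝ) (z : ℝ) :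
    Matrix (Fin s0) (Fin s0) ℝ := Matrix.of fun i j => ∑' n : ℕ, UmatR s0 A z n i j

/-- `C(z,w) = Σ_{i,j∈H} A_{i,j} z^i w^j` over `ℂ`. -/
noncomputable def CmatC (s0 : ℕ) (A : ℤ → ℤ → Matrix (Fin s0) (Fin s0) ℝ) (z w : ℂ) :
    Matrix (Fin s0) (Fin s0) ℂ :=
  ∑ i ∈ Hs, ∑ j ∈ Hs, (z ^ i * w ^ j) • (A i j).map Complex.ofReal

/-- `H1(z) = A_{*,0}(z) + A_{*,1}(z) N1(z) A_{*,-1}(z)` (complex). -/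
noncomputable def H1C (s0 : ℕ) (A : ℤ → ℤ → Matrix (Fin s0) (Fin s0) ℝ) (z : ℂ) :
    Matrix (Fin s0) (Fin s0) ℂ :=
  AstarC s0 A z 0 + AstarC s0 A z 1 * N1C s0 A z * AstarC s0 A z (-1)

/-- A matrix with row sums one and nonnegative entries. -/
def IsStochastic {n : ℕ} (M : Matrix (Fin n) (Fin n) ℝ) : Prop :=
  (∀ i j, 0 ≤ M i j) ∧ ∀ i, ∑ j, M i j = 1

end QBDSeries

namespace QBDSeries

variable {s0 : ℕ} {A : ℤ → ℤ → Matrix (Fin s0) (Fin s0) ℝ} {z : ℂ}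

lemma psum_zero {n : ℕ} (σ : Fin n → ℤ) : psum σ 0 = 0 := by
  simp [psum]

lemma psum_eq_ite {n : ℕ} (σ : Fin n → ℤ) (k : ℕ) :
    psum σ k = ∑ i : Fin n, if (i : ℕ) < k then σ i else 0 := by
  rw [psum, Finset.sum_filter]

lemma psum_cons {n : ℕ} (x : ℤ) (τ : Fin n → ℤ) (k : ℕ) :
    psum (Fin.cons x τ) (k + 1) = x + psum τ k := by
  rw [psum_eq_ite, psum_eq_ite, Fin.sum_univ_succ]
  simp [Fin.cons_succ, Nat.succ_lt_succ_iff]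

/-- The general condition family: paths staying `≥ -m` with total `-m`. -/
def condT (m : ℕ) (n : ℕ) (σ : Fin n → ℤ) : Prop :=
  (∀ k : ℕ, 1 ≤ k → k ≤ n - 1 → -(m : ℤ) ≤ psum σ k) ∧ psum σ n = -(m : ℤ)

lemma condT_zero {n : ℕ} (σ : Fin n → ℤ) : condT 0 n σ ↔ condQ n σ := by
  simp [condT, condQ]

lemma condT_cons {m : ℕ} {n : ℕ} {x : ℤ} (hx : -(m : ℤ) ≤ x) (τ : Fin n → ℤ)
    (m' : ℕ) (hm' : (m' : ℤ) = (m : ℤ) + x) :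
    condT m (n + 1) (Fin.cons x τ) ↔ condT m' n τ := by
  constructor
  · rintro ⟨h1, h2⟩
    refine ⟨fun k hk1 hk2 => ?_, ?_⟩
    · have := h1 (k + 1) (by omega) (by omega)
      rw [psum_cons] at this; omega
    · rw [psum_cons] at h2; omega
  · rintro ⟨h1, h2⟩
    refine ⟨fun k hk1 hk2 => ?_, ?_⟩
    · obtain ⟨k', rfl⟩ : ∃ k', k = k' + 1 := ⟨k - 1, by omega⟩
      rw [psum_cons]
      rcases Nat.eq_zero_or_pos k' with rfl | hk'
      · rw [psum_zero]; omega
      · have := h1 k' (by omega) (by omega)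
        omega
    · rw [psum_cons, h2]; omega

lemma condT_cons_neg {n : ℕ} (τ : Fin n → ℤ) : ¬ condT 0 (n + 1) (Fin.cons (-1) τ) := by
  rintro ⟨h1, h2⟩
  have key : psum (Fin.cons (-1) τ) 1 = -1 := by
    have := psum_cons (-1) τ 0
    rw [psum_zero] at this
    simpa using this
  rcases Nat.eq_zero_or_pos n with rfl | hn
  · simp only [Nat.zero_add] at h2; omega
  · have := h1 1 le_rfl (by omega)
    omega

end QBDSeries
namespace QBDSeries

variable {s0 : ℕ} {A : ℤ → ℤ → Matrix (Fin s0) (Fin s0) ℝ} {z : ℂ}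

open Classical in
lemma pathSumC_congr {n : ℕ} (A : ℤ → ℤ → Matrix (Fin s0) (Fin s0) ℝ) (z : ℂ)
    {c1 c2 : (Fin n → ℤ) → Prop} (h : ∀ σ, c1 σ ↔ c2 σ) :
    pathSumC s0 A z n c1 = pathSumC s0 A z n c2 := by
  unfold pathSumC
  refine Finset.sum_congr rfl fun σ _ => ?_
  exact if_congr (h _) rfl rfl

open Classical in
lemma pathSumC_false {n : ℕ} (A : ℤ → ℤ → Matrix (Fin s0) (Fin s0) ℝ) (z : ℂ)
    {c : (Fin n → ℤ) → Prop} (h : ∀ σ, ¬ c σ) :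
    pathSumC s0 A z n c = 0 := by
  unfold pathSumC
  refine Finset.sum_eq_zero fun σ _ => ?_
  rw [if_neg (h _)]

open Classical in
lemma pathSumC_zero (A : ℤ → ℤ → Matrix (Fin s0) (Fin s0) ℝ) (z : ℂ)
    (c : (Fin 0 → ℤ) → Prop) (f : Fin 0 → ℤ) :
    pathSumC s0 A z 0 c = if c f then 1 else 0 := by
  unfold pathSumC
  rw [Fintype.sum_unique]
  have h1 : (fun k => (((default : Fin 0 → {x : ℤ // x ∈ Hs})) k : ℤ)) = f :=
    Subsingleton.elim _ _
  rw [h1]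
  simp

open Classical in
set_option maxHeartbeats 1000000 in
lemma pathSumC_succ {n : ℕ} (A : ℤ → ℤ → Matrix (Fin s0) (Fin s0) ℝ) (z : ℂ)
    (c : (Fin (n + 1) → ℤ) → Prop) :
    pathSumC s0 A z (n + 1) c =
      AstarC s0 A z (-1) * pathSumC s0 A z n (fun τ => c (Fin.cons (-1) τ)) +
      AstarC s0 A z 0 * pathSumC s0 A z n (fun τ => c (Fin.cons 0 τ)) +
      AstarC s0 A z 1 * pathSumC s0 A z n (fun τ => c (Fin.cons 1 τ)) := by
  classical
  set β := {x : ℤ // x ∈ Hs} with hβ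
  let e : β × (Fin n → β) ≃ (Fin (n + 1) → β) := Fin.consEquiv (fun _ : Fin (n + 1) => β)
  let F : (Fin (n + 1) → β) → Matrix (Fin s0) (Fin s0) ℂ := fun σ =>
    if c (fun k => (σ k : ℤ)) then (List.ofFn fun k : Fin (n + 1) => AstarC s0 A z (σ k : ℤ)).prod
    else 0
  have e_apply : ∀ (x : β) (τ : Fin n → β), e (x, τ) = Fin.cons x τ := fun _ _ => rfl
  have step : ∀ (x : β) (τ : Fin n → β),
      F (Fin.cons x τ) =
        (if c (Fin.cons (x : ℤ) (fun k => (τ k : ℤ))) then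
          AstarC s0 A z (x : ℤ) * (List.ofFn fun k : Fin n => AstarC s0 A z (τ k : ℤ)).prod
        else 0) := by
    intro x τ
    have hcc : (fun k => ((Fin.cons x τ : Fin (n + 1) → β) k : ℤ))
        = Fin.cons (x : ℤ) (fun k => (τ k : ℤ)) := by
      funext k
      refine Fin.cases ?_ (fun i => ?_) k
      · simp
      · simp [Fin.cons_succ]
    have hprod : (List.ofFn fun k : Fin (n + 1) =>
        AstarC s0 A z ((Fin.cons x τ : Fin (n + 1) → β) k : ℤ))
        = AstarC s0 A z (x : ℤ) :: (List.ofFn fun k : Fin n => AstarC s0 A z (τ k : ℤ)) := by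
      rw [List.ofFn_succ]
      simp [Fin.cons_succ]
    show (if c (fun k => ((Fin.cons x τ : Fin (n + 1) → β) k : ℤ)) then _ else _) = _
    rw [hcc, hprod, List.prod_cons]
  have key : ∀ y : ℤ,
      (∑ τ : Fin n → β,
        if c (Fin.cons y (fun k => (τ k : ℤ))) then
          AstarC s0 A z y * (List.ofFn fun k : Fin n => AstarC s0 A z (τ k : ℤ)).prod
        else 0)
      = AstarC s0 A z y * pathSumC s0 A z n (fun τ => c (Fin.cons y τ)) := by
    intro y
    rw [pathSumC, Finset.mul_sum]
    refine Finset.sum_congr rfl fun τ _ => ?_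
    split <;> simp
  calc pathSumC s0 A z (n + 1) c = ∑ σ : Fin (n + 1) → β, F σ := rfl
    _ = ∑ p : β × (Fin n → β), F (e p) := (Equiv.sum_comp e F).symm
    _ = ∑ x : β, ∑ τ : Fin n → β, F (Fin.cons x τ) := by
        rw [Fintype.sum_prod_type]
        exact Finset.sum_congr rfl fun x _ => Finset.sum_congr rfl fun τ _ => by rw [e_apply]
    _ = ∑ x : β, AstarC s0 A z (x : ℤ) * pathSumC s0 A z n (fun τ => c (Fin.cons (x : ℤ) τ)) := by
        refine Finset.sum_congr rfl fun x _ => ?_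
        rw [Finset.sum_congr rfl fun τ _ => step x τ]
        exact key (x : ℤ)
    _ = ∑ y ∈ Hs, AstarC s0 A z y * pathSumC s0 A z n (fun τ => c (Fin.cons y τ)) :=
        Finset.sum_coe_sort Hs
          (fun y => AstarC s0 A z y * pathSumC s0 A z n (fun τ => c (Fin.cons y τ)))
    _ = _ := by
        show ∑ y ∈ ({-1, 0, 1} : Finset ℤ), _ = _
        rw [Finset.sum_insert (by norm_num), Finset.sum_insert (by norm_num),
          Finset.sum_singleton, ← add_assoc]

end QBDSeries
namespace QBDSeries

variable {s0 : ℕ}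

/-- `T_m^{(n)}(z)`: sum over paths staying `≥ -m` with total `-m`. -/
noncomputable def TmatC (s0 : ℕ) (A : ℤ → ℤ → Matrix (Fin s0) (Fin s0) ℝ) (z : ℂ) (m n : ℕ) :
    Matrix (Fin s0) (Fin s0) ℂ := pathSumC s0 A z n (condT m n)

variable (A : ℤ → ℤ → Matrix (Fin s0) (Fin s0) ℝ) (z : ℂ)

lemma QmatC_eq_T (n : ℕ) : QmatC s0 A z n = TmatC s0 A z 0 n :=
  pathSumC_congr A z (fun σ => (condT_zero σ).symm)

open Classical in
lemma TmatC_zero (m : ℕ) : TmatC s0 A z m 0 = if m = 0 then 1 else 0 := by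
  rw [TmatC, pathSumC_zero A z _ (fun k => k.elim0)]
  by_cases hm : m = 0
  · subst hm
    rw [if_pos ⟨fun k h1 h2 => by omega, by rw [psum_zero]; simp⟩, if_pos rfl]
  · rw [if_neg, if_neg hm]
    rintro ⟨-, h2⟩
    rw [psum_zero] at h2
    omega

lemma Trec (m n : ℕ) :
    TmatC s0 A z (m + 1) (n + 1) =
      AstarC s0 A z (-1) * TmatC s0 A z m n +
      AstarC s0 A z 0 * TmatC s0 A z (m + 1) n +
      AstarC s0 A z 1 * TmatC s0 A z (m + 2) n := by
  rw [TmatC, pathSumC_succ]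
  congr 1
  · congr 1
    · congr 1
      exact pathSumC_congr A z fun τ =>
        condT_cons (by omega) τ m (by omega)
    · congr 1
      exact pathSumC_congr A z fun τ =>
        condT_cons (by omega) τ (m + 1) (by omega)
  · congr 1
    exact pathSumC_congr A z fun τ =>
      condT_cons (by omega) τ (m + 2) (by omega)

lemma Qrec (n : ℕ) :
    TmatC s0 A z 0 (n + 1) =
      AstarC s0 A z 0 * TmatC s0 A z 0 n + AstarC s0 A z 1 * TmatC s0 A z 1 n := by
  rw [TmatC, pathSumC_succ]
  rw [pathSumC_false A z (fun τ => condT_cons_neg τ), mul_zero, zero_add]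
  congr 1
  · congr 1
    exact pathSumC_congr A z fun τ =>
      condT_cons (by omega) τ 0 (by omega)
  · congr 1
    exact pathSumC_congr A z fun τ =>
      condT_cons (by omega) τ 1 (by omega)

/-- Key convolution identity: decomposition at the first passage to level `-(j+1)`. -/
lemma Tconv : ∀ n j m : ℕ,
    TmatC s0 A z (j + m + 1) (n + 1) =
      ∑ p ∈ Finset.HasAntidiagonal.antidiagonal n,
        TmatC s0 A z j p.1 * AstarC s0 A z (-1) * TmatC s0 A z m p.2 := by
  intro n
  induction n with
  | zero =>
    intro j m
    rw [Finset.Nat.antidiagonal_zero, Finset.sum_singleton,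
      show j + m + 1 = (j + m) + 1 from rfl, Trec A z (j + m) 0]
    simp only [TmatC_zero]
    by_cases hj : j = 0 <;> by_cases hm : m = 0 <;> simp [hj, hm]
  | succ n ih =>
    intro j m
    rw [Finset.Nat.sum_antidiagonal_succ]
    rcases Nat.eq_zero_or_pos j with rfl | hj
    · -- j = 0 : leading factor is `Q`
      rw [TmatC_zero, if_pos rfl, one_mul]
      have expand : ∀ p ∈ Finset.HasAntidiagonal.antidiagonal n,
          TmatC s0 A z 0 (p.1 + 1) * AstarC s0 A z (-1) * TmatC s0 A z m p.2
          = AstarC s0 A z 0 * (TmatC s0 A z 0 p.1 * AstarC s0 A z (-1) * TmatC s0 A z m p.2)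
            + AstarC s0 A z 1 * (TmatC s0 A z 1 p.1 * AstarC s0 A z (-1) * TmatC s0 A z m p.2) := by
        intro p _
        rw [Qrec]
        noncomm_ring
      rw [Finset.sum_congr rfl expand, Finset.sum_add_distrib, ← Finset.mul_sum, ← Finset.mul_sum,
        ← ih 0 m, ← ih 1 m]
      simp only [show (0 : ℕ) + m + 1 = m + 1 from by omega,
        show (1 : ℕ) + m + 1 = m + 2 from by omega, one_mul]
      rw [show m + 1 = (m : ℕ) + 1 from rfl, Trec A z m (n + 1), add_assoc]
    · -- j = j' + 1
      obtain ⟨j', rfl⟩ : ∃ j'', j = j'' + 1 := ⟨j - 1, by omega⟩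
      rw [TmatC_zero, if_neg (by omega), zero_mul, zero_mul, zero_add]
      have expand : ∀ p ∈ Finset.HasAntidiagonal.antidiagonal n,
          TmatC s0 A z (j' + 1) (p.1 + 1) * AstarC s0 A z (-1) * TmatC s0 A z m p.2
          = AstarC s0 A z (-1) * (TmatC s0 A z j' p.1 * AstarC s0 A z (-1) * TmatC s0 A z m p.2)
            + AstarC s0 A z 0 * (TmatC s0 A z (j' + 1) p.1 * AstarC s0 A z (-1) * TmatC s0 A z m p.2)
            + AstarC s0 A z 1 * (TmatC s0 A z (j' + 2) p.1 * AstarC s0 A z (-1) * TmatC s0 A z m p.2) := by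
        intro p _
        rw [Trec]
        noncomm_ring
      rw [Finset.sum_congr rfl expand, Finset.sum_add_distrib, Finset.sum_add_distrib,
        ← Finset.mul_sum, ← Finset.mul_sum, ← Finset.mul_sum,
        ← ih j' m, ← ih (j' + 1) m, ← ih (j' + 2) m]
      simp only [show j' + m + 1 = j' + 1 + m from by omega,
        show j' + 1 + m + 1 = j' + 1 + m + 1 from rfl,
        show j' + 2 + m + 1 = (j' + 1 + m) + 2 from by omega,
        show j' + 1 + m + 1 = (j' + 1 + m) + 1 from by omega]
      exact Trec A z (j' + 1 + m) (n + 1)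

end QBDSeries
namespace QBDSeries

variable {s0 : ℕ} {A : ℤ → ℤ → Matrix (Fin s0) (Fin s0) ℝ} {z : ℂ}

lemma AstarR_nonneg (hAnn : ∀ i j : ℤ, ∀ k l, 0 ≤ A i j k l) {r : ℝ} (hr : 0 ≤ r)
    (i : ℤ) (k l : Fin s0) : 0 ≤ AstarR s0 A r i k l := by
  rw [AstarR, Matrix.sum_apply]
  refine Finset.sum_nonneg fun j _ => ?_
  rw [Matrix.smul_apply, smul_eq_mul]
  exact mul_nonneg (zpow_nonneg hr j) (hAnn j i k l)

lemma Astar_norm_le (hAnn : ∀ i j : ℤ, ∀ k l, 0 ≤ A i j k l)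
    (i : ℤ) (k l : Fin s0) :
    ‖AstarC s0 A z i k l‖ ≤ AstarR s0 A (‖z‖) i k l := by
  have h : AstarC s0 A z i k l = ∑ j ∈ Hs, z ^ j * ((A j i k l : ℝ) : ℂ) := by
    rw [AstarC, Matrix.sum_apply]
    refine Finset.sum_congr rfl fun j _ => ?_
    rw [Matrix.smul_apply, Matrix.map_apply, smul_eq_mul]
  have h2 : AstarR s0 A (‖z‖) i k l = ∑ j ∈ Hs, (‖z‖) ^ j * A j i k l := by
    rw [AstarR, Matrix.sum_apply]
    refine Finset.sum_congr rfl fun j _ => ?_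
    rw [Matrix.smul_apply, smul_eq_mul]
  rw [h, h2]
  refine (norm_sum_le _ _).trans (Finset.sum_le_sum fun j _ => ?_)
  rw [norm_mul, norm_zpow, Complex.norm_real, Real.norm_eq_abs,
    abs_of_nonneg (hAnn j i k l)]

lemma ofFn_prod_nonneg : ∀ {n : ℕ} (G : Fin n → Matrix (Fin s0) (Fin s0) ℝ),
    (∀ i k l, 0 ≤ G i k l) → ∀ k l, 0 ≤ (List.ofFn G).prod k l := by
  intro n
  induction n with
  | zero =>
    intro G _ k l
    rw [List.ofFn_zero, List.prod_nil, Matrix.one_apply]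
    split <;> norm_num
  | succ n ih =>
    intro G hG k l
    rw [List.ofFn_succ, List.prod_cons, Matrix.mul_apply]
    exact Finset.sum_nonneg fun u _ =>
      mul_nonneg (hG 0 k u) (ih _ (fun i k l => hG i.succ k l) u l)

lemma ofFn_prod_norm_le : ∀ {n : ℕ} (F : Fin n → Matrix (Fin s0) (Fin s0) ℂ)
    (G : Fin n → Matrix (Fin s0) (Fin s0) ℝ),
    (∀ i k l, ‖F i k l‖ ≤ G i k l) → (∀ i k l, 0 ≤ G i k l) →
    ∀ k l, ‖(List.ofFn F).prod k l‖ ≤ (List.ofFn G).prod k l := by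
  intro n
  induction n with
  | zero =>
    intro F G _ _ k l
    rw [List.ofFn_zero, List.ofFn_zero, List.prod_nil, List.prod_nil,
      Matrix.one_apply, Matrix.one_apply]
    split <;> norm_num
  | succ n ih =>
    intro F G hFG hG k l
    rw [List.ofFn_succ, List.ofFn_succ, List.prod_cons, List.prod_cons,
      Matrix.mul_apply, Matrix.mul_apply]
    refine (norm_sum_le _ _).trans (Finset.sum_le_sum fun u _ => ?_)
    rw [norm_mul]
    exact mul_le_mul (hFG 0 k u)
      (ih _ _ (fun i k l => hFG i.succ k l) (fun i k l => hG i.succ k l) u l)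
      (norm_nonneg _) (hG 0 k u)

open Classical in
lemma pathSum_norm_le (hAnn : ∀ i j : ℤ, ∀ k l, 0 ≤ A i j k l)
    {n : ℕ} (c : (Fin n → ℤ) → Prop) (i j : Fin s0) :
    ‖pathSumC s0 A z n c i j‖ ≤ pathSumR s0 A (‖z‖) n c i j := by
  unfold pathSumC pathSumR
  rw [Matrix.sum_apply, Matrix.sum_apply]
  refine (norm_sum_le _ _).trans (Finset.sum_le_sum fun σ _ => ?_)
  rw [apply_ite (fun M : Matrix (Fin s0) (Fin s0) ℂ => M i j),
    apply_ite (fun M : Matrix (Fin s0) (Fin s0) ℝ => M i j)]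
  split
  · exact ofFn_prod_norm_le _ _ (fun k => Astar_norm_le hAnn _)
      (fun k => AstarR_nonneg hAnn (norm_nonneg z) _) i j
  · simp

lemma QmatC_norm_le (hAnn : ∀ i j : ℤ, ∀ k l, 0 ≤ A i j k l) (n : ℕ) (i j : Fin s0) :
    ‖QmatC s0 A z n i j‖ ≤ QmatR s0 A (‖z‖) n i j :=
  pathSum_norm_le hAnn (condQ n) i j

end QBDSeries
namespace QBDSeries

variable {s0 : ℕ} {A : ℤ → ℤ → Matrix (Fin s0) (Fin s0) ℝ} {z : ℂ}

lemma triple_entry (M B P : Matrix (Fin s0) (Fin s0) ℂ) (k l : Fin s0) :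
    (M * B * P) k l = ∑ u, ∑ v, B u v * (M k u * P v l) := by
  rw [Matrix.mul_apply]
  calc ∑ v, (M * B) k v * P v l = ∑ v, ∑ u, M k u * B u v * P v l := by
        refine Finset.sum_congr rfl fun v _ => ?_
        rw [Matrix.mul_apply, Finset.sum_mul]
    _ = ∑ u, ∑ v, M k u * B u v * P v l := Finset.sum_comm
    _ = ∑ u, ∑ v, B u v * (M k u * P v l) :=
        Finset.sum_congr rfl fun u _ => Finset.sum_congr rfl fun v _ => by ring

lemma N1C_identity (hAnn : ∀ i j : ℤ, ∀ k l, 0 ≤ A i j k l)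
    (hN : ∀ i j, Summable fun n : ℕ => QmatR s0 A (‖z‖) n i j) :
    N1C s0 A z = 1 + AstarC s0 A z 0 * N1C s0 A z +
      AstarC s0 A z 1 * (N1C s0 A z * AstarC s0 A z (-1) * N1C s0 A z) := by
  set T := TmatC s0 A z with hTdef
  set A' := AstarC s0 A z (-1) with hA'
  set A0 := AstarC s0 A z 0 with hA0
  set A1 := AstarC s0 A z 1 with hA1
  have hfT : ∀ n, QmatC s0 A z n = T 0 n := QmatC_eq_T A z
  have hnorm : ∀ k l, Summable fun n => ‖T 0 n k l‖ := by
    intro k l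
    refine Summable.of_nonneg_of_le (fun n => norm_nonneg _) (fun n => ?_) (hN k l)
    rw [← hfT]; exact QmatC_norm_le hAnn n k l
  have hsum : ∀ k l, Summable fun n => T 0 n k l := fun k l => (hnorm k l).of_norm
  have hN1 : ∀ k l, N1C s0 A z k l = ∑' n, T 0 n k l := by
    intro k l
    rw [N1C, Matrix.of_apply]
    exact tsum_congr fun n => by rw [hfT]
  have hcsum : ∀ k u v l : Fin s0,
      Summable (fun n => ∑ p ∈ Finset.HasAntidiagonal.antidiagonal n, T 0 p.1 k u * T 0 p.2 v l) :=
    fun k u v l =>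
      (summable_norm_sum_mul_antidiagonal_of_summable_norm (hnorm k u) (hnorm v l)).of_norm
  have hctsum : ∀ k u v l : Fin s0,
      ∑' n, ∑ p ∈ Finset.HasAntidiagonal.antidiagonal n, T 0 p.1 k u * T 0 p.2 v l
        = (∑' n, T 0 n k u) * (∑' n, T 0 n v l) :=
    fun k u v l =>
      (tsum_mul_tsum_eq_tsum_sum_antidiagonal_of_summable_norm (hnorm k u) (hnorm v l)).symm
  have hT1 : ∀ n, T 1 (n + 1) = ∑ p ∈ Finset.HasAntidiagonal.antidiagonal n, T 0 p.1 * A' * T 0 p.2 := by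
    intro n
    have := Tconv A z n 0 0
    simpa using this
  have hT1entry : ∀ n (k l : Fin s0), T 1 (n + 1) k l
      = ∑ u, ∑ v, A' u v * (∑ p ∈ Finset.HasAntidiagonal.antidiagonal n, T 0 p.1 k u * T 0 p.2 v l) := by
    intro n k l
    rw [hT1, Matrix.sum_apply]
    rw [Finset.sum_congr rfl fun p _ => triple_entry (T 0 p.1) A' (T 0 p.2) k l]
    rw [Finset.sum_comm]
    refine Finset.sum_congr rfl fun u _ => ?_
    rw [Finset.sum_comm]
    refine Finset.sum_congr rfl fun v _ => ?_
    rw [← Finset.mul_sum]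
  have hT1sumshift : ∀ k l, Summable fun n => T 1 (n + 1) k l := by
    intro k l
    refine Summable.congr ?_ fun n => (hT1entry n k l).symm
    exact summable_sum fun u _ => summable_sum fun v _ => (hcsum k u v l).mul_left _
  have hT1sum : ∀ k l, Summable fun n => T 1 n k l := by
    intro k l
    exact (summable_nat_add_iff 1).mp (hT1sumshift k l)
  have hT10 : T 1 0 = (0 : Matrix (Fin s0) (Fin s0) ℂ) := by
    rw [hTdef, TmatC_zero]; simp
  have hT1tsum : ∀ k l, ∑' n, T 1 n k l
      = ∑ u, ∑ v, A' u v * ((∑' n, T 0 n k u) * (∑' n, T 0 n v l)) := by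
    intro k l
    rw [Summable.tsum_eq_zero_add (hT1sum k l), hT10, Matrix.zero_apply, zero_add]
    rw [tsum_congr fun n => hT1entry n k l]
    rw [Summable.tsum_finsetSum (f := fun u n => ∑ v, A' u v * ∑ p ∈ Finset.HasAntidiagonal.antidiagonal n, T 0 p.1 k u * T 0 p.2 v l) fun u _ => summable_sum fun v _ => (hcsum k u v l).mul_left _]
    refine Finset.sum_congr rfl fun u _ => ?_
    rw [Summable.tsum_finsetSum (f := fun v n => A' u v * ∑ p ∈ Finset.HasAntidiagonal.antidiagonal n, T 0 p.1 k u * T 0 p.2 v l) fun v _ => (hcsum k u v l).mul_left _]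
    refine Finset.sum_congr rfl fun v _ => ?_
    rw [tsum_mul_left, hctsum]
  have hT1N : ∀ k l, ∑' n, T 1 n k l = (N1C s0 A z * A' * N1C s0 A z) k l := by
    intro k l
    rw [hT1tsum, triple_entry]
    exact Finset.sum_congr rfl fun u _ => Finset.sum_congr rfl fun v _ => by
      rw [hN1 k u, hN1 v l]
  ext i j
  have hs1 : Summable fun n => (A0 * T 0 n) i j := by
    refine Summable.congr ?_ fun n => (Matrix.mul_apply (M := A0) (N := T 0 n)).symm
    exact summable_sum fun k _ => (hsum k j).mul_left _
  have hs2 : Summable fun n => (A1 * T 1 n) i j := by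
    refine Summable.congr ?_ fun n => (Matrix.mul_apply (M := A1) (N := T 1 n)).symm
    exact summable_sum fun k _ => (hT1sum k j).mul_left _
  have hrec : ∀ n, T 0 (n + 1) i j = (A0 * T 0 n) i j + (A1 * T 1 n) i j := by
    intro n
    rw [hTdef, Qrec A z n, Matrix.add_apply]
  have hsum01 : Summable fun n => T 0 (n + 1) i j :=
    Summable.congr (hs1.add hs2) fun n => (hrec n).symm
  have hT00 : T 0 0 = (1 : Matrix (Fin s0) (Fin s0) ℂ) := by
    rw [hTdef, TmatC_zero]; simp
  calc N1C s0 A z i j = ∑' n, T 0 n i j := hN1 i j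
    _ = T 0 0 i j + ∑' n, T 0 (n + 1) i j := Summable.tsum_eq_zero_add (hsum i j)
    _ = (1 : Matrix (Fin s0) (Fin s0) ℂ) i j
        + (∑' n, (A0 * T 0 n) i j + ∑' n, (A1 * T 1 n) i j) := by
        rw [hT00, tsum_congr hrec, Summable.tsum_add hs1 hs2]
    _ = (1 : Matrix (Fin s0) (Fin s0) ℂ) i j
        + ((A0 * N1C s0 A z) i j + (A1 * (N1C s0 A z * A' * N1C s0 A z)) i j) := by
        congr 1
        congr 1
        · rw [tsum_congr fun n => Matrix.mul_apply (M := A0) (N := T 0 n),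
            Summable.tsum_finsetSum fun k _ => (hsum k j).mul_left _, Matrix.mul_apply]
          exact Finset.sum_congr rfl fun k _ => by rw [tsum_mul_left, hN1]
        · rw [tsum_congr fun n => Matrix.mul_apply (M := A1) (N := T 1 n),
            Summable.tsum_finsetSum fun k _ => (hT1sum k j).mul_left _, Matrix.mul_apply]
          exact Finset.sum_congr rfl fun k _ => by rw [tsum_mul_left, hT1N]
    _ = (1 + A0 * N1C s0 A z + A1 * (N1C s0 A z * A' * N1C s0 A z)) i j := by
        rw [Matrix.add_apply, Matrix.add_apply, add_assoc]

end QBDSeries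
open QBDSeries in
/-- `I − H1(z)` and `N1(z)` are invertible and `N1(z) = (I − H1(z))⁻¹`. -/
theorem statement11
    (s0 : ℕ) (hs0 : 1 ≤ s0)
    (A : ℤ → ℤ → Matrix (Fin s0) (Fin s0) ℝ)
    (hAsupp : ∀ i j : ℤ, ¬(i ∈ Hs ∧ j ∈ Hs) → A i j = 0)
    (hAnn : ∀ i j : ℤ, ∀ k l, 0 ≤ A i j k l)
    (hAst : IsStochastic (∑ i ∈ Hs, ∑ j ∈ Hs, A i j))
    (z : ℂ) (hz : z ≠ 0)
    (hN : ∀ i j, Summable fun n : ℕ => QmatR s0 A (‖z‖) n i j)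
    (hG : ∀ i j, Summable fun n : ℕ => DmatR s0 A (‖z‖) n i j)
    (hR : ∀ i j, Summable fun n : ℕ => UmatR s0 A (‖z‖) n i j) :
    IsUnit (1 - H1C s0 A z) ∧ IsUnit (N1C s0 A z) ∧
      N1C s0 A z = (1 - H1C s0 A z)⁻¹ := by
  have key := N1C_identity hAnn hN
  have main : (1 - H1C s0 A z) * N1C s0 A z = 1 := by
    have hH : H1C s0 A z * N1C s0 A z
        = AstarC s0 A z 0 * N1C s0 A z
          + AstarC s0 A z 1 * (N1C s0 A z * AstarC s0 A z (-1) * N1C s0 A z) := by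
      rw [H1C]
      noncomm_ring
    rw [sub_mul, one_mul, hH]
    nth_rewrite 1 [key]
    abel
  have main' : N1C s0 A z * (1 - H1C s0 A z) = 1 := mul_eq_one_comm.mp main
  refine ⟨⟨⟨1 - H1C s0 A z, N1C s0 A z, main, main'⟩, rfl⟩,
    ⟨⟨N1C s0 A z, 1 - H1C s0 A z, main', main⟩, rfl⟩,
    (Matrix.inv_eq_right_inv main).symm⟩
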